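/- Let d be a squarefree positive integer with d > 1 and F = ℚ(√d). If α ∈ 𝒪_F is totally positive and α ∉ ℤ, then tr(α) ≥ √(Δ_d), where tr denotes the field trace of F/ℚ. -/

import Mathlib

noncomputable section

/-- `Δ_d`: the discriminant of `ℚ(√d)` for squarefree `d > 1`. -/
def Delta (d : ℕ) : ℕ := if d % 4 = 1 then d else 4 * d

/-- `ω_d`, viewed as a real number (with `√d > 0`). -/
def omegaR (d : ℕ) : ℝ := if d % 4 = 1 then (1 + Real.sqrt d) / 2 else Real.sqrt d

/-- The conjugate `ω̄_d`, viewed as a real number. -/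
def omegaConjR (d : ℕ) : ℝ := if d % 4 = 1 then (1 - Real.sqrt d) / 2 else -Real.sqrt d

/-- `F = ℚ(√d)`, realized as an intermediate field of `ℝ/ℚ` via the embedding with `√d > 0`. -/
def Fd (d : ℕ) : IntermediateField ℚ ℝ := IntermediateField.adjoin ℚ {Real.sqrt d}

/-- The ring of integers `𝒪_F` of `F = ℚ(√d)`. -/
abbrev Od (d : ℕ) := NumberField.RingOfIntegers (Fd d)

/-- An element of `F` is totally positive if its image under each of the
(two) real embeddings of `F` is positive. -/
def TotPos {d : ℕ} (x : Fd d) : Prop := ∀ σ : Fd d →ₐ[ℚ] ℝ, 0 < σ x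

/-- The conjugate `x̄` of `x ∈ F = ℚ(√d)`, as a real number: `x̄ = tr(x) - x`. -/
def conjR {d : ℕ} (x : Fd d) : ℝ := ((Algebra.trace ℚ (Fd d) x : ℚ) : ℝ) - (x : ℝ)

/-- A (not necessarily classic) quadratic `𝒪_F`-lattice: a finitely generated
`𝒪_F`-module `L` with a quadratic map `Q : L → 𝒪_F` whose associated form
`B(x,y) = (Q(x+y)-Q(x)-Q(y))/2` (with values a priori in `F`) is symmetric
bilinear and satisfies `B(x,x) = Q(x)`. -/
structure QuadLattice (d : ℕ) where
  carrier : Type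
  [isAddCommGroup : AddCommGroup carrier]
  [isModule : Module (Od d) carrier]
  finite : Module.Finite (Od d) carrier
  Q : carrier → Od d
  B : carrier → carrier → Fd d
  B_symm : ∀ x y, B x y = B y x
  B_add_left : ∀ x y z, B (x + y) z = B x z + B y z
  B_smul_left : ∀ (a : Od d) (x y : carrier), B (a • x) y = (a : Fd d) * B x y
  B_self : ∀ x, B x x = (Q x : Fd d)
  B_def : ∀ x y, 2 * B x y = (Q (x + y) : Fd d) - (Q x : Fd d) - (Q y : Fd d)

attribute [instance] QuadLattice.isAddCommGroup QuadLattice.isModule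

namespace QuadLattice

variable {d : ℕ} (L : QuadLattice d)

/-- `L` is classic if the bilinear form takes values in `𝒪_F`. -/
def IsClassic : Prop := ∀ x y, L.B x y ∈ integralClosure ℤ (Fd d)

/-- `L` is positive definite if `Q(x)` is totally positive for all `x ≠ 0`. -/
def PosDef : Prop := ∀ x : L.carrier, x ≠ 0 → TotPos (L.Q x : Fd d)

/-- `L` is universal if `Q(L) = 𝒪_F⁺ ∪ {0}`. -/
def Universal : Prop :=
  (Set.range fun v => L.Q v) = {a : Od d | TotPos (a : Fd d)} ∪ {0}

end QuadLattice

set_option maxHeartbeats 1000000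

open Polynomial

lemma minpoly_eq_of_quadratic {K L : Type*} [Field K] [Field L] [Algebra K L]
    (x : L) (g : K[X]) (hm : g.Monic) (hdeg : g.natDegree = 2)
    (hroot : aeval x g = 0) (hx : x ∉ (algebraMap K L).range) :
    minpoly K x = g := by
  have hint : IsIntegral K x := ⟨g, hm, by simpa [Polynomial.aeval_def] using hroot⟩
  have hdvd : minpoly K x ∣ g := minpoly.dvd K x hroot
  have h2 : 2 ≤ (minpoly K x).natDegree := (minpoly.two_le_natDegree_iff hint).mpr hx
  have hmo : (minpoly K x).Monic := minpoly.monic hint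
  have hle : (minpoly K x).natDegree ≤ 2 := hdeg ▸ Polynomial.natDegree_le_of_dvd hdvd hm.ne_zero
  obtain ⟨c, hc⟩ := hdvd
  have hc0 : c ≠ 0 := by rintro rfl; rw [mul_zero] at hc; exact hm.ne_zero hc
  have hmul := Polynomial.natDegree_mul hmo.ne_zero hc0
  rw [← hc, hdeg] at hmul
  have hdegc : c.natDegree = 0 := by omega
  have hlc : c.leadingCoeff = 1 := by
    have h3 : g.leadingCoeff = (minpoly K x).leadingCoeff * c.leadingCoeff := by
      rw [hc, Polynomial.leadingCoeff_mul]
    rw [hm.leadingCoeff, hmo.leadingCoeff, one_mul] at h3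
    exact h3.symm
  have : c = 1 := by
    rw [Polynomial.eq_C_of_natDegree_eq_zero hdegc]
    rw [Polynomial.eq_C_of_natDegree_eq_zero hdegc, Polynomial.leadingCoeff_C] at hlc
    rw [hlc, map_one]
  rw [hc, this, mul_one]

lemma rat_int_of_sq_mul {d : ℕ} (hd : Squarefree d) (r : ℚ) (k : ℤ)
    (h : r ^ 2 * (d : ℚ) = (k : ℚ)) : ∃ b : ℤ, (b : ℚ) = r := by
  have hden : (r.den : ℤ) = 1 := by
    have hne : (r.den : ℚ) ≠ 0 := by exact_mod_cast r.den_ne_zero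
    have hrd : (r.num : ℚ) = r * (r.den : ℚ) := by
      have := Rat.num_div_den r
      rw [div_eq_iff hne] at this
      exact this
    have h1 : ((r.num : ℚ)) ^ 2 * d = k * (r.den : ℚ) ^ 2 := by
      rw [hrd]; linear_combination (r.den : ℚ)^2 * h
    have h2 : r.num ^ 2 * (d : ℤ) = k * (r.den : ℤ) ^ 2 := by exact_mod_cast h1
    have hdvd : ((r.den : ℤ)) ^ 2 ∣ r.num ^ 2 * (d : ℤ) := ⟨k, by linarith [h2]⟩
    have hcop : IsCoprime (r.num) ((r.den : ℤ)) :=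
      Int.isCoprime_iff_gcd_eq_one.mpr r.reduced
    have hcop2 : IsCoprime (((r.den : ℤ)) ^ 2) (r.num ^ 2) := (hcop.symm.pow)
    have hdvd2 : ((r.den : ℤ)) ^ 2 ∣ (d : ℤ) := by
      refine hcop2.dvd_of_dvd_mul_right ?_
      rwa [mul_comm] at hdvd
    have hsf : Squarefree ((d : ℤ)) := Int.squarefree_natCast.mpr hd
    have hu : IsUnit ((r.den : ℤ)) := hsf _ (by rwa [← sq])
    have hp : (0:ℤ) < (r.den : ℤ) := by exact_mod_cast r.pos
    rcases Int.isUnit_iff.mp hu with h | h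
    · exact h
    · omega
  refine ⟨r.num, ?_⟩
  have hd1 : r.den = 1 := by exact_mod_cast hden
  exact_mod_cast Rat.coe_int_num_of_den_eq_one hd1

/-- **Lemma (Statement 6).** If `α ∈ 𝒪_F` is totally positive and `α ∉ ℤ`, then
`tr(α) ≥ √Δ_d`. -/
theorem trace_ge_sqrt_discr_of_totallyPositive
    (d : ℕ) (hd : Squarefree d) (hd1 : 1 < d)
    (α : Fd d) (hα : α ∈ integralClosure ℤ (Fd d)) (hpos : TotPos α)
    (hint : ∀ n : ℤ, α ≠ (n : Fd d)) :
    Real.sqrt (Delta d) ≤ ((Algebra.trace ℚ (Fd d) α : ℚ) : ℝ) := by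
  classical
  have hd0 : (0:ℝ) ≤ (d:ℝ) := by positivity
  have hsq : Real.sqrt d ^ 2 = (d:ℝ) := Real.sq_sqrt hd0
  -- irrationality
  have hnsq : ¬ IsSquare d := by
    rintro ⟨k, hk⟩
    have hu : IsUnit k := hd k (by rw [hk])
    rw [Nat.isUnit_iff] at hu
    subst hu
    omega
  have hirr : Irrational (Real.sqrt d) := irrational_sqrt_natCast_iff.mpr hnsq
  have hnr : Real.sqrt d ∉ (algebraMap ℚ ℝ).range := by
    rintro ⟨r, hr⟩
    exact hirr ⟨r, by rw [← hr, eq_ratCast (algebraMap ℚ ℝ) r]⟩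
  -- minpoly of √d
  set g : ℚ[X] := X ^ 2 - C (d : ℚ) with hg
  have hgm : g.Monic := monic_X_pow_sub_C _ two_ne_zero
  have hgdeg : g.natDegree = 2 := natDegree_X_pow_sub_C
  have hgroot : aeval (Real.sqrt d) g = 0 := by
    simp [hg, hsq]
  have hxint : IsIntegral ℚ (Real.sqrt d) := ⟨g, hgm, by simpa [Polynomial.aeval_def] using hgroot⟩
  have hming : minpoly ℚ (Real.sqrt d) = g := minpoly_eq_of_quadratic _ g hgm hgdeg hgroot hnr
  -- power basis
  let pb : PowerBasis ℚ (Fd d) := IntermediateField.adjoin.powerBasis hxint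
  have hpbgen : algebraMap (Fd d) ℝ pb.gen = Real.sqrt d := rfl
  have hminpb : minpoly ℚ pb.gen = g := by
    rw [show pb.gen = IntermediateField.AdjoinSimple.gen ℚ (Real.sqrt d) from rfl]
    exact (IntermediateField.minpoly_gen (F := ℚ) (Real.sqrt d)).trans hming
  have hdim : pb.dim = 2 := by
    rw [show pb.dim = (minpoly ℚ (Real.sqrt d)).natDegree from rfl, hming, hgdeg]
  haveI : FiniteDimensional ℚ (Fd d) := pb.finite
  have hfinrank : Module.finrank ℚ (Fd d) = 2 := by rw [pb.finrank, hdim]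
  -- coordinates
  obtain ⟨f, hfdeg, hf⟩ := pb.exists_eq_aeval α
  set p : ℚ := f.coeff 0 with hp
  set q : ℚ := f.coeff 1 with hq
  have hαR : algebraMap (Fd d) ℝ α = (p : ℝ) + (q : ℝ) * Real.sqrt d := by
    have hfle : f.natDegree ≤ 1 := by
      rw [hdim] at hfdeg; omega
    have hfeq := Polynomial.eq_X_add_C_of_natDegree_le_one hfle
    rw [hf, ← Polynomial.aeval_algebraMap_apply, hpbgen]
    conv_lhs => rw [hfeq]
    simp only [map_add, map_mul, aeval_C, aeval_X]
    rw [eq_ratCast (algebraMap ℚ ℝ), eq_ratCast (algebraMap ℚ ℝ)]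
    ring
  -- α as combination
  have hαcomb : α = algebraMap ℚ (Fd d) p + q • pb.gen := by
    apply (algebraMap (Fd d) ℝ).injective
    rw [map_add, Algebra.smul_def, map_mul, ← IsScalarTower.algebraMap_apply,
      ← IsScalarTower.algebraMap_apply, hpbgen, hαR,
      eq_ratCast (algebraMap ℚ ℝ), eq_ratCast (algebraMap ℚ ℝ)]
  -- integrality of α
  have hαint : IsIntegral ℤ α := hα
  -- α not in range of ℚ
  have hnotrange : α ∉ (algebraMap ℚ (Fd d)).range := by
    rintro ⟨r, hr⟩
    have hrint : IsIntegral ℤ r := by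
      rw [← isIntegral_algebraMap_iff (algebraMap ℚ (Fd d)).injective, hr]
      exact hαint
    obtain ⟨n, hn⟩ := IsIntegrallyClosed.isIntegral_iff.mp hrint
    exact hint n (by rw [← hr, ← hn, show (algebraMap ℤ ℚ) n = ((n:ℤ):ℚ) from rfl, map_intCast])
  -- q ≠ 0
  have hq0 : q ≠ 0 := by
    intro h
    refine hnotrange ⟨p, ?_⟩
    rw [hαcomb, h, zero_smul, add_zero]
  -- minpoly of α
  set μ : ℚ[X] := X ^ 2 + (C (-(2 * p)) * X + C (p ^ 2 - q ^ 2 * d)) with hμ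
  have hdegtail : (C (-(2 * p)) * X + C (p ^ 2 - q ^ 2 * (d:ℚ))).degree < ((2:ℕ) : WithBot ℕ) := by
    refine lt_of_le_of_lt degree_linear_le ?_
    exact_mod_cast (by norm_num : (1:ℕ) < 2)
  have hμm : μ.Monic := monic_X_pow_add hdegtail
  have hμdeg : μ.natDegree = 2 := by
    have hdeg2 : μ.degree = 2 := by
      rw [hμ, Polynomial.degree_add_eq_left_of_degree_lt
        (by rw [Polynomial.degree_X_pow]; exact hdegtail), Polynomial.degree_X_pow]
      norm_cast
    exact Polynomial.natDegree_eq_of_degree_eq_some hdeg2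
  have hμroot : aeval α μ = 0 := by
    apply (algebraMap (Fd d) ℝ).injective
    rw [map_zero, ← Polynomial.aeval_algebraMap_apply, hαR, hμ]
    simp only [map_add, map_mul, map_pow, aeval_C, aeval_X]
    rw [eq_ratCast (algebraMap ℚ ℝ), eq_ratCast (algebraMap ℚ ℝ)]
    push_cast
    linear_combination (q:ℝ)^2 * hsq
  have hminα : minpoly ℚ α = μ := minpoly_eq_of_quadratic α μ hμm hμdeg hμroot hnotrange
  -- integer coefficients
  have hmap : minpoly ℚ α = (minpoly ℤ α).map (algebraMap ℤ ℚ) :=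
    minpoly.isIntegrallyClosed_eq_field_fractions ℚ (Fd d) hαint
  set a : ℤ := -((minpoly ℤ α).coeff 1) with ha
  set m : ℤ := (minpoly ℤ α).coeff 0 with hm
  have hμc1 : μ.coeff 1 = -(2 * p) := by
    rw [hμ]
    simp only [Polynomial.coeff_add, Polynomial.coeff_X_pow, Polynomial.coeff_C_mul,
      Polynomial.coeff_X_one, Polynomial.coeff_C]
    norm_num
  have hμc0 : μ.coeff 0 = p ^ 2 - q ^ 2 * d := by
    rw [hμ]
    simp only [Polynomial.coeff_add, Polynomial.coeff_X_pow, Polynomial.coeff_C_mul,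
      Polynomial.coeff_X_zero, Polynomial.coeff_C]
    norm_num
  have haQ : (a : ℚ) = 2 * p := by
    have h1 := congrArg (fun P => P.coeff 1) hmap
    simp only [hminα, Polynomial.coeff_map] at h1
    rw [hμc1] at h1
    have : ((minpoly ℤ α).coeff 1 : ℚ) = -(2*p) := by
      rw [show ((minpoly ℤ α).coeff 1 : ℚ) = algebraMap ℤ ℚ ((minpoly ℤ α).coeff 1) from rfl, ← h1]
    rw [ha]
    push_cast [this]
    ring
  have hmQ : (m : ℚ) = p ^ 2 - q ^ 2 * d := by
    have h1 := congrArg (fun P => P.coeff 0) hmap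
    simp only [hminα, Polynomial.coeff_map] at h1
    rw [hμc0] at h1
    rw [hm, show ((minpoly ℤ α).coeff 0 : ℚ) = algebraMap ℤ ℚ ((minpoly ℤ α).coeff 0) from rfl, ← h1]
  -- trace
  have htrgen : Algebra.trace ℚ (Fd d) pb.gen = 0 := by
    rw [pb.trace_gen_eq_nextCoeff_minpoly, hminpb]
    have hnc : g.nextCoeff = g.coeff 1 := by
      rw [Polynomial.nextCoeff_of_natDegree_pos (by omega : 0 < g.natDegree), hgdeg]
    rw [hnc, hg]
    simp [Polynomial.coeff_X_pow]
  have htr : Algebra.trace ℚ (Fd d) α = (a : ℚ) := by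
    rw [hαcomb, map_add, map_smul, htrgen, smul_zero, add_zero,
      Algebra.trace_algebraMap, hfinrank, haQ, nsmul_eq_mul]
    push_cast
    ring
  -- second embedding
  have hroot2 : aeval (-Real.sqrt d) (minpoly ℚ pb.gen) = 0 := by
    rw [hminpb, hg]
    simp [hsq]
  let σ₂ : Fd d →ₐ[ℚ] ℝ := pb.lift (-Real.sqrt d) hroot2
  have hσ₂α : σ₂ α = (p : ℝ) + (q : ℝ) * (-Real.sqrt d) := by
    rw [hαcomb, map_add, Algebra.smul_def, map_mul, AlgHom.commutes, AlgHom.commutes,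
      pb.lift_gen, eq_ratCast (algebraMap ℚ ℝ), eq_ratCast (algebraMap ℚ ℝ)]
  -- positivity
  have hpos1 : 0 < (p : ℝ) + (q : ℝ) * Real.sqrt d := by
    have h1 := hpos (Fd d).val
    change 0 < algebraMap (Fd d) ℝ α at h1
    rwa [hαR] at h1
  have hpos2 : 0 < (p : ℝ) + (q : ℝ) * (-Real.sqrt d) := by
    have h1 := hpos σ₂
    rwa [hσ₂α] at h1
  have hp_pos : 0 < p := by
    have h1 : 0 < (p : ℝ) := by nlinarith
    exact_mod_cast h1
  have hm_pos : 0 < m := by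
    have hR : 0 < ((p:ℝ) + q * Real.sqrt d) * ((p:ℝ) + q * (-Real.sqrt d)) :=
      mul_pos hpos1 hpos2
    have h2 : (0:ℝ) < (p:ℝ)^2 - (q:ℝ)^2 * d := by nlinarith [hsq]
    have h3 : (0:ℚ) < p ^ 2 - q ^ 2 * d := by exact_mod_cast h2
    have h4 : (0:ℚ) < (m:ℚ) := by rw [hmQ]; exact h3
    exact_mod_cast h4
  -- b := 2q is an integer
  have hbq : (2 * q) ^ 2 * (d : ℚ) = ((a ^ 2 - 4 * m : ℤ) : ℚ) := by
    push_cast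
    rw [haQ, hmQ]
    ring
  obtain ⟨b, hb⟩ := rat_int_of_sq_mul hd (2 * q) (a ^ 2 - 4 * m) hbq
  have hb0 : b ≠ 0 := by
    rintro rfl
    rw [Int.cast_zero] at hb
    exact hq0 (by linarith [hb.symm] : q = 0) |>.elim
  have hkey : a ^ 2 = 4 * m + b ^ 2 * d := by
    have h1 : ((a ^ 2 : ℤ) : ℚ) = ((4 * m + b ^ 2 * d : ℤ) : ℚ) := by
      push_cast
      linear_combination ((a:ℚ)+2*p)*haQ - 4*hmQ - (((b:ℤ):ℚ)+2*q)*(d:ℚ)*hb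
    exact_mod_cast h1
  have ha_pos : 0 < a := by
    have h1 : (0:ℚ) < (a:ℚ) := by rw [haQ]; positivity
    exact_mod_cast h1
  have hb2 : 1 ≤ b ^ 2 := by
    rcases lt_or_gt_of_ne hb0 with h | h <;> nlinarith
  have hdZ : (0:ℤ) < (d:ℤ) := by exact_mod_cast (by omega : 0 < d)
  -- final arithmetic
  have hΔ : (Delta d : ℤ) < a ^ 2 := by
    by_cases h4 : d % 4 = 1
    · rw [Delta, if_pos h4]
      nlinarith [hm_pos, hb2, hdZ]
    · rw [Delta, if_neg h4]
      have hd4 : d % 4 = 2 ∨ d % 4 = 3 := by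
        have hnd : ¬ (4 ∣ d) := by
          intro hdvd
          have := hd 2 (by omega)
          rw [Nat.isUnit_iff] at this
          omega
        omega
      have hbeven : Even b := by
        by_contra hbodd
        rw [Int.not_even_iff_odd] at hbodd
        obtain ⟨k, hk⟩ := hbodd
        have hdmod : (d : ℤ) % 4 = 2 ∨ (d : ℤ) % 4 = 3 := by omega
        rcases Int.even_or_odd a with ⟨j, hj⟩ | ⟨j, hj⟩
        · have h1 : 4 * j ^ 2 = 4 * m + 4 * ((k ^ 2 + k) * (d:ℤ)) + (d:ℤ) := by
            rw [hj, hk] at hkey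
            linear_combination hkey
          generalize j ^ 2 = X at h1
          generalize (k ^ 2 + k) * (d:ℤ) = Y at h1
          omega
        · have h1 : 4 * (j ^ 2 + j) + 1 = 4 * m + 4 * ((k ^ 2 + k) * (d:ℤ)) + (d:ℤ) := by
            rw [hj, hk] at hkey
            linear_combination hkey
          generalize j ^ 2 + j = X at h1
          generalize (k ^ 2 + k) * (d:ℤ) = Y at h1
          omega
      obtain ⟨c, hc⟩ := hbeven
      have hc0 : c ≠ 0 := by rintro rfl; simp at hc; exact hb0 hc
      have hc1 : 1 ≤ c ^ 2 := by
        rcases lt_or_gt_of_ne hc0 with h | h <;> nlinarith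
      have hb4 : 4 ≤ b ^ 2 := by rw [hc]; nlinarith
      push_cast
      nlinarith [hm_pos, hdZ, hb4]
  -- conclude
  rw [htr]
  have haR : ((a:ℚ):ℝ) = (a : ℝ) := by push_cast; ring
  rw [haR]
  have h1 : (Delta d : ℝ) ≤ (a:ℝ) ^ 2 := by exact_mod_cast hΔ.le
  have h2 : Real.sqrt (Delta d) ≤ Real.sqrt ((a:ℝ)^2) := Real.sqrt_le_sqrt h1
  rwa [Real.sqrt_sq (by exact_mod_cast ha_pos.le : (0:ℝ) ≤ (a:ℝ))] at h2
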